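/- Suppose ℝ^d = L_1 ⊕ ⋯ ⊕ L_m is a direct sum of nonzero linear subspaces, 1 ≤ k ≤ d, and μ is a finite Borel measure on the Grassmannian Gr(k,d) of k-dimensional subspaces of ℝ^d. Suppose that for each j ∈ {1,…,m} there is an invertible linear map A_j ∈ GL_d(ℝ) acting on each L_i as the scalar λ_{j,i} > 0, with λ_{j,j} > λ_{j,i} for all i ≠ j, such that the induced map W ↦ A_j(W) on Gr(k,d) preserves μ. Then μ is concentrated on the set of subspaces W ∈ Gr(k,d) satisfying W = (W ∩ L_1) ⊕ ⋯ ⊕ (W ∩ L_m). -/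

import Mathlib

open MeasureTheory

/-- The topology on the set of linear subspaces of a normed space, induced by the map sending
a subspace to its distance function.  On each Grassmannian of `k`-dimensional subspaces of
`ℝ^d` this coincides with the standard (compact metrizable) Grassmannian topology. -/
noncomputable instance submoduleTopologicalSpace
    {H : Type*} [NormedAddCommGroup H] [Module ℝ H] :
    TopologicalSpace (Submodule ℝ H) :=
  TopologicalSpace.induced (fun X : Submodule ℝ H => fun h : H => Metric.infDist h (X : Set H))
    inferInstance

/-- The Grassmannian of `k`-dimensional subspaces of `ℝ^d`. -/
abbrev Grass (k d : ℕ) := {W : Submodule ℝ (Fin d → ℝ) // Module.finrank ℝ W = k}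

noncomputable instance (k d : ℕ) : MeasurableSpace (Grass k d) := borel _

/-- The action of a linear automorphism of `ℝ^d` on the Grassmannian, `W ↦ A(W)`. -/
noncomputable def grMap {k d : ℕ} (A : (Fin d → ℝ) ≃ₗ[ℝ] (Fin d → ℝ)) (W : Grass k d) :
    Grass k d :=
  ⟨W.1.map (A : (Fin d → ℝ) →ₗ[ℝ] (Fin d → ℝ)), by
    rw [LinearEquiv.finrank_map_eq]; exact W.2⟩

open Metric Filter Topology

lemma continuous_infDist_coord {d : ℕ} (h : Fin d → ℝ) :
    Continuous fun X : Submodule ℝ (Fin d → ℝ) => infDist h (X : Set (Fin d → ℝ)) := by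
  show Continuous ((fun p : (Fin d → ℝ) → ℝ => p h) ∘
    (fun X : Submodule ℝ (Fin d → ℝ) => fun h' : Fin d → ℝ => infDist h' (X : Set (Fin d → ℝ))))
  exact (continuous_apply h).comp continuous_induced_dom

instance secondCountableSubmodule {d : ℕ} :
    SecondCountableTopology (Submodule ℝ (Fin d → ℝ)) := by
  obtain ⟨u, hu⟩ := TopologicalSpace.exists_dense_seq (Fin d → ℝ)
  have hG : Topology.IsInducing
      (fun X : Submodule ℝ (Fin d → ℝ) => fun n : ℕ => infDist (u n) (X : Set (Fin d → ℝ))) := by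
    constructor
    refine le_antisymm ?_ ?_
    · exact continuous_iff_le_induced.mp
        (continuous_pi fun n => continuous_infDist_coord (u n))
    · letI t2 : TopologicalSpace (Submodule ℝ (Fin d → ℝ)) :=
        TopologicalSpace.induced
          (fun X : Submodule ℝ (Fin d → ℝ) => fun n : ℕ => infDist (u n) (X : Set (Fin d → ℝ)))
          inferInstance
      show t2 ≤ submoduleTopologicalSpace
      have hcont : @Continuous _ _ t2 _
          (fun X : Submodule ℝ (Fin d → ℝ) => fun h : Fin d → ℝ => infDist h (X : Set (Fin d → ℝ))) := by
        refine @continuous_pi _ _ _ _ _ _ (fun h => ?_)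
        rw [@continuous_iff_continuousAt _ _ t2 _]
        intro X₀
        rw [ContinuousAt, Metric.tendsto_nhds]
        intro ε hε
        obtain ⟨n, hn⟩ := hu.exists_dist_lt h (show (0:ℝ) < ε/3 by linarith)
        have hc : @Continuous _ _ t2 _
            (fun X : Submodule ℝ (Fin d → ℝ) => infDist (u n) (X : Set (Fin d → ℝ))) := by
          show @Continuous _ _ t2 _ ((fun p : ℕ → ℝ => p n) ∘
            (fun X : Submodule ℝ (Fin d → ℝ) => fun n : ℕ => infDist (u n) (X : Set (Fin d → ℝ))))
          exact @Continuous.comp _ _ _ t2 _ _ _ _ (continuous_apply n) continuous_induced_dom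
        have hev := Metric.tendsto_nhds.mp (@Continuous.continuousAt _ _ t2 _ _ X₀ hc)
          (ε/3) (by linarith)
        filter_upwards [hev] with X hX
        have e1 : infDist h (X : Set (Fin d → ℝ)) ≤ infDist (u n) (X : Set (Fin d → ℝ)) + dist h (u n) :=
          infDist_le_infDist_add_dist
        have e2 : infDist (u n) (X : Set (Fin d → ℝ)) ≤ infDist h (X : Set (Fin d → ℝ)) + dist (u n) h :=
          infDist_le_infDist_add_dist
        have e3 : infDist h (X₀ : Set (Fin d → ℝ)) ≤ infDist (u n) (X₀ : Set (Fin d → ℝ)) + dist h (u n) :=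
          infDist_le_infDist_add_dist
        have e4 : infDist (u n) (X₀ : Set (Fin d → ℝ)) ≤ infDist h (X₀ : Set (Fin d → ℝ)) + dist (u n) h :=
          infDist_le_infDist_add_dist
        rw [Real.dist_eq] at hX ⊢
        rw [abs_lt] at hX ⊢
        have hd : dist (u n) h = dist h (u n) := dist_comm _ _
        constructor <;> [linarith [hX.1]; linarith [hX.2]]
      exact continuous_iff_le_induced.mp hcont
  exact hG.secondCountableTopology

instance (k d : ℕ) : SecondCountableTopology (Grass k d) :=
  Topology.IsInducing.secondCountableTopology Topology.IsInducing.subtypeVal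

instance (k d : ℕ) : BorelSpace (Grass k d) := ⟨rfl⟩

example (k d : ℕ) : SecondCountableTopology (Grass k d) := inferInstance
example (k d : ℕ) : OpensMeasurableSpace (Grass k d) := inferInstance

/-- **Furstenberg-type lemma on Grassmannians.**  Let `ℝ^d = L_1 ⊕ ⋯ ⊕ L_m` be a direct sum
of nonzero subspaces and `μ` a finite Borel measure on the Grassmannian `Gr(k,d)`.  Suppose
that for each `j` there is an invertible linear map `A_j` acting on each `L_i` as a positive
scalar `λ_{j,i}`, with `λ_{j,j} > λ_{j,i}` for `i ≠ j`, whose induced map on `Gr(k,d)`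
preserves `μ`.  Then `μ` is concentrated on subspaces `W` with `W = ⊕_i (W ∩ L_i)`. -/
theorem grassmannian_invariant_measure_concentrated_on_split_subspaces
    {d m k : ℕ} (hk1 : 1 ≤ k) (hkd : k ≤ d)
    (L : Fin m → Submodule ℝ (Fin d → ℝ))
    (hindep : iSupIndep L) (hsup : ⨆ i, L i = ⊤) (hne : ∀ i, L i ≠ ⊥)
    (μ : Measure (Grass k d)) (hfin : IsFiniteMeasure μ)
    (A : Fin m → ((Fin d → ℝ) ≃ₗ[ℝ] (Fin d → ℝ))) (lam : Fin m → Fin m → ℝ)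
    (hpos : ∀ j i, 0 < lam j i)
    (hscal : ∀ j i, ∀ v ∈ L i, A j v = lam j i • v)
    (hdom : ∀ j i, i ≠ j → lam j i < lam j j)
    (hinv : ∀ j, μ.map (grMap (A j)) = μ) :
    μ {W : Grass k d | W.1 = ⨆ i, (W.1 ⊓ L i)}ᶜ = 0 := by
  classical
  rcases eq_or_ne μ 0 with hμ0 | hμ0
  · simp [hμ0]
  -- complements
  set C : Fin m → Submodule ℝ (Fin d → ℝ) := fun j => ⨆ i, ⨆ _ : i ≠ j, L i with hCdef
  have hcompl : ∀ j, IsCompl (L j) (C j) := by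
    intro j
    refine ⟨hindep j, codisjoint_iff.mpr ?_⟩
    rw [eq_top_iff, ← hsup]
    refine iSup_le fun i => ?_
    rcases eq_or_ne i j with rfl | hij
    · exact le_sup_left
    · exact le_trans (le_iSup₂ (f := fun i (_ : i ≠ j) => L i) i hij) le_sup_right
  set P : Fin m → ((Fin d → ℝ) →ₗ[ℝ] (Fin d → ℝ)) :=
    fun j => (L j).subtype ∘ₗ ((L j).projectionOnto (C j) (hcompl j)) with hPdef
  have hPmem : ∀ j x, P j x ∈ L j := fun j x =>
    ((L j).projectionOnto (C j) (hcompl j) x).2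
  have hPleft : ∀ j, ∀ x ∈ L j, P j x = x := by
    intro j x hx
    have := Submodule.projectionOnto_apply_left (hcompl j) ⟨x, hx⟩
    simpa [hPdef] using congrArg Subtype.val this
  have hPright : ∀ j, ∀ x ∈ C j, P j x = 0 := by
    intro j x hx
    have := Submodule.projectionOnto_apply_of_mem_right (hcompl j) hx
    simpa [hPdef] using congrArg Subtype.val this
  have hPsub : ∀ j x, x - P j x ∈ C j := by
    intro j x
    have hx : x ∈ L j ⊔ C j := by rw [(hcompl j).sup_eq_top]; trivial
    rcases Submodule.mem_sup.mp hx with ⟨y, hy, z, hz, rfl⟩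
    have hP : P j (y + z) = y := by
      rw [map_add, hPleft j y hy, hPright j z hz, add_zero]
    rw [hP]
    simpa using hz
  -- iterates of grMap
  have hgr : ∀ (B : (Fin d → ℝ) ≃ₗ[ℝ] (Fin d → ℝ)) (n : ℕ) (W : Grass k d),
      ((grMap B)^[n] W).1 = W.1.map (B.toLinearMap ^ n) := by
    intro B n W
    induction n with
    | zero => simp [Module.End.one_eq_id, Submodule.map_id]
    | succ n ih =>
      rw [Function.iterate_succ_apply']
      show (((grMap B)^[n] W).1).map B.toLinearMap = _
      rw [ih, ← Submodule.map_comp, ← Module.End.mul_eq_comp, ← pow_succ']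
  -- powers act as scalars on L i
  have hApow : ∀ j i (n : ℕ), ∀ v ∈ L i, ((A j).toLinearMap ^ n) v = (lam j i)^n • v := by
    intro j i n v hv
    induction n with
    | zero => simp
    | succ n ih =>
      rw [pow_succ, Module.End.mul_apply]
      have : (A j).toLinearMap v = lam j i • v := hscal j i v hv
      rw [this, _root_.map_smul, ih, smul_smul, ← pow_succ']
  -- normalized powers tend to zero on C j
  have hT0 : ∀ j, ∀ c ∈ C j,
      Tendsto (fun n => ((lam j j)⁻¹)^n • (((A j).toLinearMap ^ n) c)) atTop (𝓝 0) := by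
    intro j c hc
    rw [hCdef] at hc
    refine Submodule.iSup_induction (motive := fun c =>
        Tendsto (fun n => ((lam j j)⁻¹)^n • (((A j).toLinearMap ^ n) c)) atTop (𝓝 0))
        _ hc ?_ ?_ ?_
    · intro i x hx
      rcases eq_or_ne i j with rfl | hij
      · rw [iSup_neg (by simp)] at hx
        simp only [Submodule.mem_bot] at hx
        subst hx
        simpa using tendsto_const_nhds
      · have hx' : x ∈ L i := by rwa [iSup_pos hij] at hx
        have heq : ∀ n, ((lam j j)⁻¹)^n • (((A j).toLinearMap ^ n) x)
            = (lam j i / lam j j)^n • x := by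
          intro n
          rw [hApow j i n x hx', smul_smul, div_pow, division_def, inv_pow, mul_comm]
        rw [funext heq]
        have hr0 : (0:ℝ) ≤ lam j i / lam j j := le_of_lt (div_pos (hpos j i) (hpos j j))
        have hr1 : lam j i / lam j j < 1 := (div_lt_one (hpos j j)).mpr (hdom j i hij)
        have := (tendsto_pow_atTop_nhds_zero_of_lt_one hr0 hr1).smul_const x
        simpa using this
    · simpa using tendsto_const_nhds
    · intro x y hx hy
      have := hx.add hy
      simp only [smul_add, map_add] at this ⊢
      simpa using this
  -- convergence of infDist along orbits
  have hconv : ∀ j (W : Grass k d), ∀ w ∈ W.1,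
      Tendsto (fun n => infDist (P j w) ((((grMap (A j))^[n] W).1 : Set (Fin d → ℝ))))
        atTop (𝓝 0) := by
    intro j W w hw
    have hne0 : lam j j ≠ 0 := ne_of_gt (hpos j j)
    have hc := hT0 j (w - P j w) (hPsub j w)
    refine squeeze_zero (fun n => infDist_nonneg)
      (g := fun n => ‖((lam j j)⁻¹)^n • (((A j).toLinearMap ^ n) (w - P j w))‖) ?_ ?_
    · intro n
      have hxmem : ((lam j j)⁻¹)^n • (((A j).toLinearMap ^ n) w) ∈ ((grMap (A j))^[n] W).1 := by
        rw [hgr]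
        exact Submodule.smul_mem _ _ (Submodule.mem_map_of_mem hw)
      have hdist := infDist_le_dist_of_mem hxmem (x := P j w)
      have hdecomp : ((lam j j)⁻¹)^n • (((A j).toLinearMap ^ n) w)
          = P j w + ((lam j j)⁻¹)^n • (((A j).toLinearMap ^ n) (w - P j w)) := by
        have hw' : w = P j w + (w - P j w) := by ring
        calc ((lam j j)⁻¹)^n • (((A j).toLinearMap ^ n) w)
            = ((lam j j)⁻¹)^n • (((A j).toLinearMap ^ n) (P j w)
              + ((A j).toLinearMap ^ n) (w - P j w)) := by
              rw [← map_add]; rw [← hw']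
          _ = ((lam j j)⁻¹)^n • ((lam j j)^n • P j w)
              + ((lam j j)⁻¹)^n • (((A j).toLinearMap ^ n) (w - P j w)) := by
              rw [hApow j j n _ (hPmem j w), smul_add]
          _ = P j w + ((lam j j)⁻¹)^n • (((A j).toLinearMap ^ n) (w - P j w)) := by
              rw [smul_smul, ← mul_pow, inv_mul_cancel₀ hne0, one_pow, one_smul]
      rw [hdecomp] at hdist
      calc infDist (P j w) ((((grMap (A j))^[n] W).1 : Set (Fin d → ℝ))) ≤ _ := hdist
        _ = ‖((lam j j)⁻¹)^n • (((A j).toLinearMap ^ n) (w - P j w))‖ := by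
          rw [dist_eq_norm]; simp
    · have := hc.norm
      simpa using this
  -- recurrence
  have hrec : ∀ j : Fin m, ∀ᵐ W ∂μ, ∀ s ∈ nhds W,
      ∃ᶠ n in atTop, (grMap (A j))^[n] W ∈ s := by
    intro j
    have hae : AEMeasurable (grMap (A j)) μ := by
      by_contra h
      have := hinv j
      rw [Measure.map_of_not_aemeasurable h] at this
      exact hμ0 this.symm
    set g := hae.mk (grMap (A j)) with hgdef
    have hgm : Measurable g := hae.measurable_mk
    have hgeq : grMap (A j) =ᵐ[μ] g := hae.ae_eq_mk
    have hmap : μ.map g = μ := by rw [← Measure.map_congr hgeq]; exact hinv j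
    have hpres : MeasurePreserving g μ μ := ⟨hgm, hmap⟩
    have hcons : Conservative g μ := hpres.conservative
    have hg_rec := hcons.ae_frequently_mem_of_mem_nhds
    set N := toMeasurable μ {x | grMap (A j) x ≠ g x} with hNdef
    have hNnull : μ N = 0 := by
      rw [hNdef, measure_toMeasurable]
      exact hgeq
    have hEnull : μ (⋃ n, g^[n] ⁻¹' N) = 0 := by
      refine measure_iUnion_null fun n => ?_
      rw [(hpres.iterate n).measure_preimage
        (measurableSet_toMeasurable μ _).nullMeasurableSet]
      exact hNnull
    have hEae : ∀ᵐ x ∂μ, ∀ n, g^[n] x ∉ N := by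
      rw [ae_iff]
      refine measure_mono_null ?_ hEnull
      intro x hx
      simp only [Set.mem_setOf_eq, not_forall, not_not] at hx
      obtain ⟨n, hn⟩ := hx
      exact Set.mem_iUnion.mpr ⟨n, hn⟩
    filter_upwards [hg_rec, hEae] with W hW hWE s hs
    have horb : ∀ n, (grMap (A j))^[n] W = g^[n] W := by
      intro n
      induction n with
      | zero => rfl
      | succ n ih =>
        rw [Function.iterate_succ_apply', Function.iterate_succ_apply', ih]
        by_contra hne'
        exact (hWE n) (subset_toMeasurable μ _ hne')
    exact (hW s hs).mono fun n hn => by rw [horb n]; exact hn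
  -- conclusion
  have hsplit : ∀ᵐ W ∂μ, W.1 = ⨆ i, (W.1 ⊓ L i) := by
    have hall : ∀ᵐ W ∂μ, ∀ j : Fin m, ∀ s ∈ nhds W,
        ∃ᶠ n in atTop, (grMap (A j))^[n] W ∈ s := ae_all_iff.mpr hrec
    filter_upwards [hall] with W hW
    have hPW : ∀ j, ∀ w ∈ W.1, P j w ∈ W.1 := by
      intro j w hw
      have hcont : Continuous fun V : Grass k d => infDist (P j w) (V.1 : Set (Fin d → ℝ)) :=
        (continuous_infDist_coord (P j w)).comp continuous_subtype_val
      have hlim := hconv j W w hw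
      have hzero : infDist (P j w) (W.1 : Set (Fin d → ℝ)) = 0 := by
        by_contra hz
        have hpos' : 0 < infDist (P j w) (W.1 : Set (Fin d → ℝ)) :=
          lt_of_le_of_ne infDist_nonneg (Ne.symm hz)
        set ε := infDist (P j w) (W.1 : Set (Fin d → ℝ)) / 2 with hεdef
        have hεpos : 0 < ε := by positivity
        have hs : (fun V : Grass k d => infDist (P j w) (V.1 : Set (Fin d → ℝ))) ⁻¹'
            Metric.ball (infDist (P j w) (W.1 : Set (Fin d → ℝ))) ε ∈ nhds W :=
          hcont.continuousAt.preimage_mem_nhds (Metric.ball_mem_nhds _ hεpos)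
        have hfreq := hW j _ hs
        have hev : ∀ᶠ n in atTop,
            infDist (P j w) ((((grMap (A j))^[n] W).1 : Set (Fin d → ℝ))) < ε :=
          hlim.eventually (gt_mem_nhds hεpos)
        obtain ⟨n, hn1, hn2⟩ := (hfreq.and_eventually hev).exists
        rw [Set.mem_preimage, Metric.mem_ball, Real.dist_eq, abs_lt] at hn1
        rw [hεdef] at hn1 hn2
        linarith [hn1.1, hn1.2]
      have hclosed : IsClosed (W.1 : Set (Fin d → ℝ)) := Submodule.closed_of_finiteDimensional _
      exact (hclosed.mem_iff_infDist_zero ⟨0, W.1.zero_mem⟩).mpr hzero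
    -- algebra
    have hsum : ∀ x : Fin d → ℝ, x = ∑ i, P i x := by
      intro x
      have hx : x ∈ ⨆ i, L i := by rw [hsup]; trivial
      refine Submodule.iSup_induction (motive := fun x => x = ∑ i, P i x) L hx ?_ ?_ ?_
      · intro i x hxi
        have hval : ∀ i', P i' x = if i' = i then x else 0 := by
          intro i'
          rcases eq_or_ne i' i with rfl | hne'
          · simp [hPleft i' x hxi]
          · have hxC : x ∈ C i' := by
              rw [hCdef]
              exact Submodule.mem_iSup_of_mem i
                (by rw [iSup_pos (Ne.symm hne')]; exact hxi)
            simp [hPright i' x hxC, hne']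
        rw [Finset.sum_congr rfl fun i' _ => hval i']
        simp
      · simp
      · intro x y hx hy
        conv_lhs => rw [hx, hy]
        rw [← Finset.sum_add_distrib]
        exact Finset.sum_congr rfl fun i _ => (map_add (P i) x y).symm
    apply le_antisymm
    · intro w hw
      have hw' : w = ∑ i, P i w := hsum w
      rw [hw']
      refine Submodule.sum_mem _ fun i _ => Submodule.mem_iSup_of_mem i ?_
      exact Submodule.mem_inf.mpr ⟨hPW i w hw, hPmem i w⟩
    · exact iSup_le fun i => inf_le_left
  rw [Set.compl_setOf]
  exact ae_iff.mp hsplit
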